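/- If μ_n = μ_{n+1} (i.e., μ_n is a common eigenvalue of the two decoupled Dirichlet problems on (-1,0) and (0,1)), then μ_n is simultaneously an eigenvalue of the point-mass problem (λ_{n+1} = μ_n) and of the regular problem with M = 0 (λ'_{n+1} = μ_n). -/

import Mathlib

open Real Set Filter

/-- `y` (with derivative `yD`) solves the Sturm–Liouville equation
`-(σ y')' + q y = lam ρ y` on `[a,b]`. -/
def SL (σ q ρ : ℝ → ℝ) (lam a b : ℝ) (y yD : ℝ → ℝ) : Prop :=
  (∀ x ∈ Set.Icc a b, HasDerivAt y (yD x) x) ∧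
  (∀ x ∈ Set.Icc a b, HasDerivAt (fun t => σ t * yD t) (q x * y x - lam * ρ x * y x) x)

/-- Coefficient is continuous and positive on `[a,b]`. -/
def GoodCoeff (f : ℝ → ℝ) (a b : ℝ) : Prop :=
  ContinuousOn f (Set.Icc a b) ∧ ∀ x ∈ Set.Icc a b, 0 < f x

lemma SL_smul (σ q ρ : ℝ → ℝ) (lam a b : ℝ) (c : ℝ) (y yD : ℝ → ℝ)
    (h : SL σ q ρ lam a b y yD) :
    SL σ q ρ lam a b (fun t => c * y t) (fun t => c * yD t) := by
  constructor
  · intro x hx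
    exact (h.1 x hx).const_mul c
  · intro x hx
    have hfun : (fun t => σ t * (c * yD t)) = fun t => c * (σ t * yD t) := by
      funext t; ring
    rw [hfun]
    have := (h.2 x hx).const_mul c
    refine this.congr_deriv ?_
    beta_reduce
    ring

/-- If `μ` is a common eigenvalue of the two decoupled Dirichlet problems on
`(-1,0)` and `(0,1)`, then `μ` is simultaneously an eigenvalue of the point-mass
problem and of the regular (`M = 0`) transmission problem. -/
theorem common_eigenvalue_transfer
    (ρ₁ σ₁ q₁ ρ₂ σ₂ q₂ : ℝ → ℝ) (M μ₀ : ℝ) (hM : 0 < M)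
    (hρ₁ : GoodCoeff ρ₁ (-1) 0) (hσ₁ : GoodCoeff σ₁ (-1) 0) (hq₁ : GoodCoeff q₁ (-1) 0)
    (hρ₂ : GoodCoeff ρ₂ 0 1) (hσ₂ : GoodCoeff σ₂ 0 1) (hq₂ : GoodCoeff q₂ 0 1)
    (y₁ yD₁ y₂ yD₂ : ℝ → ℝ)
    -- μ₀ is a Dirichlet eigenvalue on (-1,0):
    (h₁ : SL σ₁ q₁ ρ₁ μ₀ (-1) 0 y₁ yD₁) (h₁bc : y₁ (-1) = 0 ∧ y₁ 0 = 0)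
    (h₁nt : ∃ x ∈ Set.Icc (-1:ℝ) 0, y₁ x ≠ 0)
    -- μ₀ is a Dirichlet eigenvalue on (0,1):
    (h₂ : SL σ₂ q₂ ρ₂ μ₀ 0 1 y₂ yD₂) (h₂bc : y₂ 0 = 0 ∧ y₂ 1 = 0)
    (h₂nt : ∃ x ∈ Set.Icc (0:ℝ) 1, y₂ x ≠ 0) :
    -- μ₀ is an eigenvalue of the point-mass problem:
    (∃ u uD v vD : ℝ → ℝ,
      SL σ₁ q₁ ρ₁ μ₀ (-1) 0 u uD ∧ SL σ₂ q₂ ρ₂ μ₀ 0 1 v vD ∧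
      u (-1) = 0 ∧ v 1 = 0 ∧ u 0 = v 0 ∧
      σ₁ 0 * uD 0 - σ₂ 0 * vD 0 = μ₀ * M * u 0 ∧
      ((∃ x ∈ Set.Icc (-1:ℝ) 0, u x ≠ 0) ∨ (∃ x ∈ Set.Icc (0:ℝ) 1, v x ≠ 0))) ∧
    -- μ₀ is an eigenvalue of the regular (M = 0) problem:
    (∃ u uD v vD : ℝ → ℝ,
      SL σ₁ q₁ ρ₁ μ₀ (-1) 0 u uD ∧ SL σ₂ q₂ ρ₂ μ₀ 0 1 v vD ∧
      u (-1) = 0 ∧ v 1 = 0 ∧ u 0 = v 0 ∧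
      σ₁ 0 * uD 0 = σ₂ 0 * vD 0 ∧
      ((∃ x ∈ Set.Icc (-1:ℝ) 0, u x ≠ 0) ∨ (∃ x ∈ Set.Icc (0:ℝ) 1, v x ≠ 0))) := by

  obtain ⟨c₁, c₂, hc, hnt⟩ : ∃ c₁ c₂ : ℝ,
      c₁ * (σ₁ 0 * yD₁ 0) = c₂ * (σ₂ 0 * yD₂ 0) ∧ (c₁ ≠ 0 ∨ c₂ ≠ 0) := by
    by_cases hB : σ₂ 0 * yD₂ 0 = 0
    · by_cases hA : σ₁ 0 * yD₁ 0 = 0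
      · exact ⟨1, 1, by rw [hA, hB], Or.inl one_ne_zero⟩
      · exact ⟨0, 1, by rw [hB]; ring, Or.inr one_ne_zero⟩
    · refine ⟨1, (σ₁ 0 * yD₁ 0) / (σ₂ 0 * yD₂ 0), ?_, Or.inl one_ne_zero⟩
      field_simp
      rw [mul_assoc (σ₁ 0 * yD₁ 0), mul_div_assoc, div_self hB, mul_one]
  set u : ℝ → ℝ := fun t => c₁ * y₁ t with hu
  set uD : ℝ → ℝ := fun t => c₁ * yD₁ t with huD
  set v : ℝ → ℝ := fun t => c₂ * y₂ t with hv
  set vD : ℝ → ℝ := fun t => c₂ * yD₂ t with hvD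
  have hSLu : SL σ₁ q₁ ρ₁ μ₀ (-1) 0 u uD := SL_smul _ _ _ _ _ _ _ _ _ h₁
  have hSLv : SL σ₂ q₂ ρ₂ μ₀ 0 1 v vD := SL_smul _ _ _ _ _ _ _ _ _ h₂
  have hu1 : u (-1) = 0 := by simp [hu, h₁bc.1]
  have hv1 : v 1 = 0 := by simp [hv, h₂bc.2]
  have hu0 : u 0 = 0 := by simp [hu, h₁bc.2]
  have hv0 : v 0 = 0 := by simp [hv, h₂bc.1]
  have hflux : σ₁ 0 * uD 0 = σ₂ 0 * vD 0 := by
    simp only [huD, hvD]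
    linarith [hc]
  have hntfin : (∃ x ∈ Set.Icc (-1:ℝ) 0, u x ≠ 0) ∨ (∃ x ∈ Set.Icc (0:ℝ) 1, v x ≠ 0) := by
    rcases hnt with h | h
    · left
      obtain ⟨x, hx, hxne⟩ := h₁nt
      exact ⟨x, hx, mul_ne_zero h hxne⟩
    · right
      obtain ⟨x, hx, hxne⟩ := h₂nt
      exact ⟨x, hx, mul_ne_zero h hxne⟩
  refine ⟨⟨u, uD, v, vD, hSLu, hSLv, hu1, hv1, by rw [hu0, hv0], ?_, hntfin⟩,
          ⟨u, uD, v, vD, hSLu, hSLv, hu1, hv1, by rw [hu0, hv0], hflux, hntfin⟩⟩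
  rw [hu0, hflux]; ring
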